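/- Let G be a finite triangle-free simple graph in which every connected component has at least 3 vertices. Then a vertex of G is special if and only if it is a support vertex; consequently, sup(G) is the unique S(G)-set of G. -/

import Mathlib

open SimpleGraph

namespace TotalDom

variable {V : Type*}

/-- The closed neighborhood `N[v]` of a vertex. -/
def cnbr (G : SimpleGraph V) (v : V) : Set V := insert v (G.neighborSet v)

/-- `S` is a dominating set: every vertex outside `S` has a neighbor in `S`. -/
def IsDomSet (G : SimpleGraph V) (S : Set V) : Prop := ∀ v ∉ S, ∃ u ∈ S, G.Adj u v

/-- `S` is a total dominating set: every vertex has a neighbor in `S`. -/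
def IsTotalDomSet (G : SimpleGraph V) (S : Set V) : Prop := ∀ v : V, ∃ u ∈ S, G.Adj u v

/-- The domination number `γ(G)`. -/
noncomputable def domNum (G : SimpleGraph V) : ℕ :=
  sInf {n | ∃ S : Set V, IsDomSet G S ∧ S.ncard = n}

/-- The total domination number `γₜ(G)`. -/
noncomputable def totalDomNum (G : SimpleGraph V) : ℕ :=
  sInf {n | ∃ S : Set V, IsTotalDomSet G S ∧ S.ncard = n}

/-- A minimum dominating set (γ-set). -/
def IsMinDomSet (G : SimpleGraph V) (S : Set V) : Prop := IsDomSet G S ∧ S.ncard = domNum G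

/-- `S` is a packing: closed neighborhoods of distinct members are disjoint. -/
def IsPacking (G : SimpleGraph V) (S : Set V) : Prop :=
  S.Pairwise fun u v => Disjoint (cnbr G u) (cnbr G v)

/-- `M(v)`: neighbors of `v` having a neighbor outside `N[v]`. -/
def Mset (G : SimpleGraph V) (v : V) : Set V :=
  {u | G.Adj v u ∧ ∃ w, G.Adj u w ∧ w ∉ cnbr G v}

/-- `D(v)`: neighbors `u` of `v` that are not true twins of `v` with `N[u] ⊆ N[v]`. -/
def Dset (G : SimpleGraph V) (v : V) : Set V :=
  {u | G.Adj v u ∧ cnbr G u ≠ cnbr G v ∧ cnbr G u ⊆ cnbr G v}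

/-- `T(v)`: `v` together with its true twins. -/
def Tset (G : SimpleGraph V) (v : V) : Set V := {u | cnbr G u = cnbr G v}

/-- A non-isolated vertex `v` is special if no `u ∈ M(v)` satisfies `D(v) ⊆ N(u)`. -/
def Special (G : SimpleGraph V) (v : V) : Prop :=
  (G.neighborSet v).Nonempty ∧ ¬ ∃ u ∈ Mset G v, Dset G v ⊆ G.neighborSet u

/-- An `S(G)`-set: a set of special vertices containing exactly one vertex from each
true-twin equivalence class of special vertices. -/
def IsSGSet (G : SimpleGraph V) (S : Set V) : Prop :=
  (∀ u ∈ S, Special G u) ∧ ∀ v, Special G v → ∃! u, u ∈ S ∧ u ∈ Tset G v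

/-- `G` has no isolated vertices. -/
def NoIsolated (G : SimpleGraph V) : Prop := ∀ v : V, ∃ u, G.Adj v u

/-- `G` contains no induced copy of `H`. -/
def Free {α : Type*} (H : SimpleGraph α) (G : SimpleGraph V) : Prop := IsEmpty (H ↪g G)

/-- `H₁`: a 6-cycle plus one chord between vertices at distance two along the cycle. -/
def H1 : SimpleGraph (Fin 6) := cycleGraph 6 ⊔ fromEdgeSet {s(0, 2)}

/-- `H₂`: a 6-cycle `x₁x₂x₃x₄x₅x₆` plus the chords `x₂x₆` and `x₃x₅`. -/
def H2 : SimpleGraph (Fin 6) := cycleGraph 6 ⊔ fromEdgeSet {s(1, 5), s(2, 4)}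

/-- A leaf: a vertex of degree one. -/
def IsLeaf (G : SimpleGraph V) (v : V) : Prop := ∃! u, G.Adj v u

/-- A support vertex: a vertex adjacent to a leaf. -/
def IsSupport (G : SimpleGraph V) (v : V) : Prop := ∃ u, G.Adj v u ∧ IsLeaf G u

/-- `sup(G)`: the set of support vertices. -/
def supSet (G : SimpleGraph V) : Set V := {v | IsSupport G v}


lemma mem_cnbr (G : SimpleGraph V) {v x : V} : x ∈ cnbr G v ↔ x = v ∨ G.Adj v x := by
  simp [cnbr]

lemma tri_free (G : SimpleGraph V) (h : Free (cycleGraph 3) G) {a b c : V}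
    (hab : G.Adj a b) (hbc : G.Adj b c) (hac : G.Adj a c) : False := by
  refine h.false ⟨⟨![a,b,c], ?_⟩, ?_⟩
  · intro i j hij
    fin_cases i <;> fin_cases j <;> simp_all [hab.ne, hbc.ne, hac.ne, hab.ne', hbc.ne', hac.ne']
  · intro i j
    fin_cases i <;> fin_cases j <;>
      dsimp only [DFunLike.coe] <;> simp [hab, hbc, hac, hab.symm, hbc.symm, hac.symm, G.irrefl] <;> decide

lemma comp_small (G : SimpleGraph V) {v u : V} (hvu : G.Adj v u)
    (hv : ∀ w, G.Adj v w → w = u) (hu : ∀ w, G.Adj u w → w = v)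
    (hcomp : 3 ≤ (G.connectedComponentMk v).supp.ncard) : False := by
  have key : ∀ {x y : V} (_ : G.Walk x y), x = v ∨ x = u → y = v ∨ y = u := by
    intro x y p
    induction p with
    | nil => exact id
    | cons h q ih =>
      rintro (rfl | rfl)
      · exact ih (Or.inr (hv _ h))
      · exact ih (Or.inl (hu _ h))
  have hsub : (G.connectedComponentMk v).supp ⊆ {v, u} := by
    intro w hw
    rw [ConnectedComponent.mem_supp_iff] at hw
    obtain ⟨p⟩ := (ConnectedComponent.exact hw).symm
    simpa using key p (Or.inl rfl)
  have h1 := Set.ncard_le_ncard hsub (Set.toFinite _)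
  have h2 : ({v, u} : Set V).ncard ≤ 2 :=
    (Set.ncard_insert_le _ _).trans (by simp [Set.ncard_singleton])
  omega

lemma mem_Dset (G : SimpleGraph V) (hC3 : Free (cycleGraph 3) G)
    (hcomp : ∀ v : V, 3 ≤ (G.connectedComponentMk v).supp.ncard) (v u : V) :
    u ∈ Dset G v ↔ G.Adj v u ∧ ∀ w, G.Adj u w → w = v := by
  constructor
  · rintro ⟨hadj, hne, hsub⟩
    refine ⟨hadj, fun w hw => ?_⟩
    have hm : w ∈ cnbr G v := hsub ((mem_cnbr G).2 (Or.inr hw))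
    rcases (mem_cnbr G).1 hm with rfl | h
    · rfl
    · exact absurd h (fun h => tri_free G hC3 hadj hw h)
  · rintro ⟨hadj, huniq⟩
    refine ⟨hadj, ?_, ?_⟩
    · intro heq
      have hvw : ∀ w, G.Adj v w → w = u := by
        intro w hw
        have hm : w ∈ cnbr G u := heq ▸ ((mem_cnbr G).2 (Or.inr hw))
        rcases (mem_cnbr G).1 hm with rfl | h
        · rfl
        · exact absurd (huniq w h ▸ hw) (G.loopless.irrefl v)
      exact comp_small G hadj hvw huniq (hcomp v)
    · intro x hx
      rcases (mem_cnbr G).1 hx with rfl | h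
      · exact (mem_cnbr G).2 (Or.inr hadj)
      · exact (mem_cnbr G).2 (Or.inl (huniq x h))

lemma mem_Mset (G : SimpleGraph V) (hC3 : Free (cycleGraph 3) G) (v u : V) :
    u ∈ Mset G v ↔ G.Adj v u ∧ ∃ w, G.Adj u w ∧ w ≠ v := by
  constructor
  · rintro ⟨hadj, w, hw, hwn⟩
    exact ⟨hadj, w, hw, fun h => hwn ((mem_cnbr G).2 (Or.inl h))⟩
  · rintro ⟨hadj, w, hw, hwn⟩
    refine ⟨hadj, w, hw, fun hm => ?_⟩
    rcases (mem_cnbr G).1 hm with rfl | h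
    · exact hwn rfl
    · exact tri_free G hC3 hadj hw h

lemma twin_support (G : SimpleGraph V) (hC3 : Free (cycleGraph 3) G)
    (hcomp : ∀ v : V, 3 ≤ (G.connectedComponentMk v).supp.ncard) {v u : V}
    (hv : IsSupport G v) (heq : cnbr G u = cnbr G v) : u = v := by
  by_contra hne
  have hadj : G.Adj v u := by
    have hm : u ∈ cnbr G v := heq ▸ ((mem_cnbr G).2 (Or.inl rfl))
    rcases (mem_cnbr G).1 hm with h | h
    · exact absurd h hne
    · exact h
  obtain ⟨l, hvl, w, hw, huw⟩ := hv
  have hlv : ∀ y, G.Adj l y → y = v := fun y hy => (huw y hy).trans (huw v hvl.symm).symm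
  have hm : l ∈ cnbr G u := heq.symm ▸ ((mem_cnbr G).2 (Or.inr hvl))
  rcases (mem_cnbr G).1 hm with rfl | h
  · have hvw : ∀ x, G.Adj v x → x = l := by
      intro x hx
      have hmx : x ∈ cnbr G l := heq.symm ▸ ((mem_cnbr G).2 (Or.inr hx))
      rcases (mem_cnbr G).1 hmx with rfl | h
      · rfl
      · exact absurd (hlv x h ▸ hx) (G.loopless.irrefl v)
    exact comp_small G hvl hvw hlv (hcomp v)
  · exact hne (hlv u h.symm)

/-- In a triangle-free graph all of whose connected components have at least 3 vertices,
a vertex is special iff it is a support vertex; consequently `sup(G)` is the unique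
`S(G)`-set of `G`. -/
theorem stmt11 {V : Type*} [Fintype V] (G : SimpleGraph V) (hiso : NoIsolated G)
    (hC3 : Free (cycleGraph 3) G)
    (hcomp : ∀ v : V, 3 ≤ (G.connectedComponentMk v).supp.ncard) :
    (∀ v : V, Special G v ↔ IsSupport G v) ∧
      IsSGSet G (supSet G) ∧ ∀ S : Set V, IsSGSet G S → S = supSet G := by
  have hspec : ∀ v : V, Special G v ↔ IsSupport G v := by
    intro v
    constructor
    · rintro ⟨hne, hno⟩
      by_contra hns
      obtain ⟨u, hu⟩ := hiso v
      apply hno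
      refine ⟨u, (mem_Mset G hC3 v u).2 ⟨hu, ?_⟩, ?_⟩
      · by_contra hall
        push_neg at hall
        exact hns ⟨u, hu, v, hu.symm, fun y hy => hall y hy⟩
      · intro x hx
        exfalso
        rw [mem_Dset G hC3 hcomp] at hx
        exact hns ⟨x, hx.1, v, hx.1.symm, hx.2⟩
    · rintro ⟨l, hvl, w, hw, huw⟩
      have hlv : ∀ y, G.Adj l y → y = v := fun y hy => (huw y hy).trans (huw v hvl.symm).symm
      refine ⟨⟨l, hvl⟩, ?_⟩
      rintro ⟨u, hu, hsub⟩
      have hul : G.Adj u l := hsub ((mem_Dset G hC3 hcomp v l).2 ⟨hvl, hlv⟩)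
      have huv : u = v := hlv u hul.symm
      rw [mem_Mset G hC3] at hu
      exact G.loopless.irrefl v (huv ▸ hu.1)
  refine ⟨hspec, ⟨fun u hu => (hspec u).2 hu, fun v hv => ?_⟩, fun S hS => ?_⟩
  · have hvs : IsSupport G v := (hspec v).1 hv
    refine ⟨v, ⟨hvs, rfl⟩, ?_⟩
    rintro y ⟨hy1, hy2⟩
    exact twin_support G hC3 hcomp hvs hy2
  · ext x
    constructor
    · intro hx
      exact (hspec x).1 (hS.1 x hx)
    · intro hx
      obtain ⟨u, ⟨huS, huT⟩, -⟩ := hS.2 x ((hspec x).2 hx)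
      have := twin_support G hC3 hcomp hx huT
      rwa [this] at huS


end TotalDom
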